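/- For every integer r ≥ 1, the quantity ∏_{i=1}^{r}(1 − 1/(r·i+1)) satisfies |∏_{i=1}^{r}(1 − 1/(r·i+1)) − (1 − H_r/r)| ≤ (π²/6 + e)·(H_r/r)², where H_r = ∑_{i=1}^{r} 1/i is the r-th harmonic number. -/

import Mathlib

open Finset

private lemma aux_weier {s : Finset ℕ} {x : ℕ → ℝ} (h : ∀ i ∈ s, 0 ≤ x i ∧ x i ≤ 1) :
    1 - ∑ i ∈ s, x i ≤ ∏ i ∈ s, (1 - x i) := by
  classical
  induction s using Finset.induction with
  | empty => simp
  | @insert a s hnot ih =>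
    have ha := h a (mem_insert_self a s)
    have hs : ∀ i ∈ s, 0 ≤ x i ∧ x i ≤ 1 := fun i hi => h i (mem_insert_of_mem hi)
    have ihs := ih hs
    rw [Finset.sum_insert hnot, Finset.prod_insert hnot]
    have hsum : 0 ≤ ∑ i ∈ s, x i := Finset.sum_nonneg fun i hi => (hs i hi).1
    nlinarith [ha.1, ha.2, hsum, ihs]

private lemma aux_sumsq (r : ℕ) (hr : 1 ≤ r) :
    ∑ i ∈ Finset.Icc 1 r, (1 : ℝ) / (i : ℝ) ^ 2 ≤ 2 - 1 / r := by
  induction r, hr using Nat.le_induction with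
  | base => norm_num
  | succ n hn ih =>
    rw [Finset.sum_Icc_succ_top (by omega : 1 ≤ n + 1)]
    have h1 : (0 : ℝ) < n := by exact_mod_cast hn
    have h2 : (0 : ℝ) < (n : ℝ) + 1 := by linarith
    have key : (1 : ℝ) / ((n : ℝ) + 1) ^ 2 ≤ 1 / n - 1 / ((n : ℝ) + 1) := by
      rw [div_sub_div _ _ (ne_of_gt h1) (ne_of_gt h2)]
      rw [div_le_div_iff₀ (by positivity) (by positivity)]
      ring_nf
      nlinarith
    push_cast
    linarith [ih]

theorem stmt3 (r : ℕ) (hr : 1 ≤ r) (H : ℝ) (hH : H = ∑ i ∈ Finset.Icc 1 r, (1 : ℝ) / i) :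
    |(∏ i ∈ Finset.Icc 1 r, (1 - 1 / ((r : ℝ) * i + 1))) - (1 - H / r)| ≤
      (Real.pi ^ 2 / 6 + Real.exp 1) * (H / r) ^ 2 := by
  have hr0 : (0 : ℝ) < r := by exact_mod_cast hr
  set S : ℝ := ∑ i ∈ Finset.Icc 1 r, 1 / ((r : ℝ) * i + 1) with hS
  set P : ℝ := ∏ i ∈ Finset.Icc 1 r, (1 - 1 / ((r : ℝ) * i + 1)) with hP
  -- basic facts about each term
  have hterm : ∀ i ∈ Finset.Icc 1 r, (0 : ℝ) < (r : ℝ) * i ∧ (0:ℝ) < (r:ℝ) * i + 1 := by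
    intro i hi
    have hi1 : 1 ≤ i := (Finset.mem_Icc.mp hi).1
    have : (0 : ℝ) < i := by exact_mod_cast hi1
    constructor <;> nlinarith
  have hx : ∀ i ∈ Finset.Icc 1 r, 0 ≤ 1 / ((r : ℝ) * i + 1) ∧ 1 / ((r : ℝ) * i + 1) ≤ 1 := by
    intro i hi
    obtain ⟨h1, h2⟩ := hterm i hi
    constructor
    · positivity
    · rw [div_le_one h2]; linarith
  -- T = H / r as a sum
  have hT : H / r = ∑ i ∈ Finset.Icc 1 r, 1 / ((r : ℝ) * i) := by
    rw [hH, Finset.sum_div]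
    refine Finset.sum_congr rfl fun i hi => ?_
    rw [div_div, mul_comm]
  have hST : S ≤ H / r := by
    rw [hT, hS]
    refine Finset.sum_le_sum fun i hi => ?_
    obtain ⟨h1, h2⟩ := hterm i hi
    apply div_le_div_of_nonneg_left (by norm_num) h1; linarith
  have hS0 : 0 ≤ S := Finset.sum_nonneg fun i hi => (hx i hi).1
  -- T - S ≤ 2 / r^2
  have hTS : H / r - S ≤ 2 / (r : ℝ) ^ 2 := by
    rw [hT, hS, ← Finset.sum_sub_distrib]
    have : ∀ i ∈ Finset.Icc 1 r,
        1 / ((r : ℝ) * i) - 1 / ((r : ℝ) * i + 1) ≤ (1 / (r:ℝ)^2) * (1 / (i:ℝ)^2) := by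
      intro i hi
      obtain ⟨h1, h2⟩ := hterm i hi
      have hi0 : (0 : ℝ) < i := by
        have := (Finset.mem_Icc.mp hi).1; exact_mod_cast this
      rw [div_sub_div _ _ (ne_of_gt h1) (ne_of_gt h2)]
      have hr2 : (1 / (r:ℝ)^2) * (1 / (i:ℝ)^2) = 1 / ((r:ℝ)*i)^2 := by
        field_simp
      rw [hr2]
      rw [div_le_div_iff₀ (by positivity) (by positivity)]
      nlinarith
    calc ∑ i ∈ Finset.Icc 1 r, (1 / ((r : ℝ) * i) - 1 / ((r : ℝ) * i + 1))
        ≤ ∑ i ∈ Finset.Icc 1 r, (1 / (r:ℝ)^2) * (1 / (i:ℝ)^2) := Finset.sum_le_sum this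
      _ = (1 / (r:ℝ)^2) * ∑ i ∈ Finset.Icc 1 r, (1 / (i:ℝ)^2) := by rw [Finset.mul_sum]
      _ ≤ (1 / (r:ℝ)^2) * 2 := by
          have := aux_sumsq r hr
          have h1r : (0:ℝ) ≤ 1 / r := by positivity
          have : ∑ i ∈ Finset.Icc 1 r, (1:ℝ) / (i:ℝ)^2 ≤ 2 := by linarith
          exact mul_le_mul_of_nonneg_left this (by positivity)
      _ = 2 / (r:ℝ)^2 := by ring
  -- lower bound : 1 - S ≤ P
  have hlow : 1 - S ≤ P := aux_weier hx
  -- upper bound : P ≤ 1 - S + S^2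
  have hup : P ≤ 1 - S + S ^ 2 := by
    have h1 : P ≤ Real.exp (-S) := by
      rw [hS, ← Finset.sum_neg_distrib, Real.exp_sum]
      refine Finset.prod_le_prod (fun i hi => by linarith [(hx i hi).1, (hx i hi).2]) ?_
      intro i hi
      have := Real.add_one_le_exp (-(1 / ((r : ℝ) * i + 1)))
      linarith
    have h2 : Real.exp (-S) ≤ 1 / (1 + S) := by
      rw [le_div_iff₀ (by linarith)]
      have := Real.add_one_le_exp S
      calc Real.exp (-S) * (1 + S) ≤ Real.exp (-S) * Real.exp S := by
            apply mul_le_mul_of_nonneg_left _ (Real.exp_nonneg _)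
            linarith
        _ = 1 := by rw [← Real.exp_add]; simp
    have h3 : 1 / (1 + S) ≤ 1 - S + S ^ 2 := by
      rw [div_le_iff₀ (by linarith)]
      nlinarith
    linarith
  -- H ≥ 1 so H/r ≥ 1/r
  have hH1 : 1 ≤ H := by
    rw [hH]
    have h := Finset.single_le_sum (f := fun i : ℕ => (1:ℝ)/i)
      (fun i _ => by positivity) (show (1:ℕ) ∈ Finset.Icc 1 r by simp; omega)
    simpa using h
  have hTr : 1 / (r:ℝ) ≤ H / r := by gcongr
  -- constants
  have hpi : (3:ℝ) ≤ Real.pi := Real.pi_gt_three.le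
  have hpi2 : (9:ℝ) ≤ Real.pi ^ 2 := by nlinarith
  have he : (2:ℝ) ≤ Real.exp 1 := by
    have := Real.add_one_le_exp (1:ℝ); linarith
  have hC : (3:ℝ) ≤ Real.pi ^ 2 / 6 + Real.exp 1 := by linarith
  have hT0 : 0 < H / r := by positivity
  have hTr2 : 1 / (r:ℝ)^2 ≤ (H / r)^2 := by
    have : (1 / (r:ℝ))^2 ≤ (H/r)^2 := by
      apply pow_le_pow_left₀ (by positivity) hTr
    calc 1 / (r:ℝ)^2 = (1/(r:ℝ))^2 := by ring
      _ ≤ (H/r)^2 := this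
  rw [abs_sub_le_iff]
  constructor
  · -- P - (1 - H/r) ≤ bound
    have hS2 : S ^ 2 ≤ (H/r)^2 := by
      apply pow_le_pow_left₀ hS0 hST
    have : P - (1 - H/r) ≤ S^2 + (H/r - S) := by linarith
    calc P - (1 - H/r) ≤ (H/r)^2 + 2/(r:ℝ)^2 := by linarith
      _ ≤ (H/r)^2 + 2 * (H/r)^2 := by
          have h2r : 2/(r:ℝ)^2 = 2*(1/(r:ℝ)^2) := by ring
          linarith
      _ = 3 * (H/r)^2 := by ring
      _ ≤ (Real.pi ^ 2 / 6 + Real.exp 1) * (H / r) ^ 2 := by nlinarith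
  · -- (1 - H/r) - P ≤ bound : P ≥ 1 - S ≥ 1 - H/r so LHS ≤ 0
    have : 1 - H/r ≤ P := by linarith
    have hb : 0 ≤ (Real.pi ^ 2 / 6 + Real.exp 1) * (H / r) ^ 2 := by positivity
    linarith
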